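/- The classical limit of the Gervais–Neveu–Felder equation is the generalized classical Yang–Baxter equation: let ε > 0, Λ ⊆ ℂ, and let R(γ,λ,x) be an End(ℂ^N⊗ℂ^N)-valued function of (γ,λ,x) ∈ (−ε,ε)×Λ×ℝ^N whose entries are twice continuously differentiable in (γ,x), with R(0,λ,x) = Id for all λ,x. Suppose that for every γ ∈ (−ε,ε), all λ_1,λ_2,λ_3 ∈ ℂ with λ_a−λ_b ∈ Λ, and all x, the Gervais–Neveu–Felder equation holds: R_{12}(λ_{12}, x+γh^{(3)}) R_{13}(λ_{13}, x−γh^{(2)}) R_{23}(λ_{23}, x+γh^{(1)}) = R_{23}(λ_{23}, x−γh^{(1)}) R_{13}(λ_{13}, x+γh^{(2)}) R_{12}(λ_{12}, x−γh^{(3)}), where λ_{ab} = λ_a−λ_b and, for a matrix-valued function S of x placed in two factors of (ℂ^N)^{⊗3}, S(x ± γh^{(c)}) acts on basis vectors carrying index k in the remaining factor c as S(x ± γδ_k), δ_k being the k-th standard basis vector of ℝ^N. Define r(λ,x) := −(1/2)·∂_γ R(γ,λ,x)|_{γ=0}. Then r satisfies the generalized classical Yang–Baxter equation: [r_{12},r_{13}]+[r_{12},r_{23}]+[r_{13},r_{23}]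 − Σ_ν (e_{νν})^{(1)} ∂_{x_ν} r_{23} + Σ_ν (e_{νν})^{(2)} ∂_{x_ν} r_{13} − Σ_ν (e_{νν})^{(3)} ∂_{x_ν} r_{12} = 0, with r_{ab} = r(λ_{ab}, x). -/

import Mathlib

/- STATEMENT 7: The classical limit of the Gervais–Neveu–Felder equation is
   the generalized classical Yang–Baxter equation: if R(γ,λ,x) is C² in (γ,x),
   equals Id at γ = 0, and satisfies the GNF equation for all small γ, then
   r(λ,x) := −(1/2)∂_γ R|_{γ=0} satisfies the generalized CYBE. -/

set_option maxHeartbeats 4000000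
noncomputable section
open Matrix Complex
open scoped Kronecker BigOperators

variable (N : ℕ)

def E (i j : Fin N) : Matrix (Fin N) (Fin N) ℂ := Matrix.single i j 1

/-- S placed in factors 1,2 of (ℂ^N)^{⊗3}, with argument dynamically shifted by s·h^{(3)}:
    on basis vectors with index k in factor 3 it acts as S(x + s·δ_k). -/
def sh12 (S : (Fin N → ℝ) → Matrix (Fin N × Fin N) (Fin N × Fin N) ℂ)
    (x : Fin N → ℝ) (s : ℝ) :
    Matrix (Fin N × Fin N × Fin N) (Fin N × Fin N × Fin N) ℂ :=
  fun p q => if p.2.2 = q.2.2 then S (x + s • (Pi.single q.2.2 1 : Fin N → ℝ)) (p.1, p.2.1) (q.1, q.2.1) else 0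

/-- S placed in factors 1,3, shifted by s·h^{(2)} -/
def sh13 (S : (Fin N → ℝ) → Matrix (Fin N × Fin N) (Fin N × Fin N) ℂ)
    (x : Fin N → ℝ) (s : ℝ) :
    Matrix (Fin N × Fin N × Fin N) (Fin N × Fin N × Fin N) ℂ :=
  fun p q => if p.2.1 = q.2.1 then S (x + s • (Pi.single q.2.1 1 : Fin N → ℝ)) (p.1, p.2.2) (q.1, q.2.2) else 0

/-- S placed in factors 2,3, shifted by s·h^{(1)} -/
def sh23 (S : (Fin N → ℝ) → Matrix (Fin N × Fin N) (Fin N × Fin N) ℂ)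
    (x : Fin N → ℝ) (s : ℝ) :
    Matrix (Fin N × Fin N × Fin N) (Fin N × Fin N × Fin N) ℂ :=
  fun p q => if p.1 = q.1 then S (x + s • (Pi.single q.1 1 : Fin N → ℝ)) (p.2.1, p.2.2) (q.2.1, q.2.2) else 0

/-- static placements of a fixed matrix in two of the three factors -/
def pl12 (A : Matrix (Fin N × Fin N) (Fin N × Fin N) ℂ) :
    Matrix (Fin N × Fin N × Fin N) (Fin N × Fin N × Fin N) ℂ :=
  fun p q => A (p.1, p.2.1) (q.1, q.2.1) * (if p.2.2 = q.2.2 then 1 else 0)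

def pl13 (A : Matrix (Fin N × Fin N) (Fin N × Fin N) ℂ) :
    Matrix (Fin N × Fin N × Fin N) (Fin N × Fin N × Fin N) ℂ :=
  fun p q => A (p.1, p.2.2) (q.1, q.2.2) * (if p.2.1 = q.2.1 then 1 else 0)

def pl23 (A : Matrix (Fin N × Fin N) (Fin N × Fin N) ℂ) :
    Matrix (Fin N × Fin N × Fin N) (Fin N × Fin N × Fin N) ℂ :=
  fun p q => A (p.2.1, p.2.2) (q.2.1, q.2.2) * (if p.1 = q.1 then 1 else 0)

def pl1 (h : Matrix (Fin N) (Fin N) ℂ) :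
    Matrix (Fin N × Fin N × Fin N) (Fin N × Fin N × Fin N) ℂ :=
  fun p q => h p.1 q.1 * (if p.2.1 = q.2.1 then 1 else 0) * (if p.2.2 = q.2.2 then 1 else 0)

def pl2 (h : Matrix (Fin N) (Fin N) ℂ) :
    Matrix (Fin N × Fin N × Fin N) (Fin N × Fin N × Fin N) ℂ :=
  fun p q => h p.2.1 q.2.1 * (if p.1 = q.1 then 1 else 0) * (if p.2.2 = q.2.2 then 1 else 0)

def pl3 (h : Matrix (Fin N) (Fin N) ℂ) :
    Matrix (Fin N × Fin N × Fin N) (Fin N × Fin N × Fin N) ℂ :=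
  fun p q => h p.2.2 q.2.2 * (if p.1 = q.1 then 1 else 0) * (if p.2.1 = q.2.1 then 1 else 0)

/-- entrywise real partial derivative ∂_{x_ν} -/
def pderivMat {α : Type} (ν : Fin N)
    (f : (Fin N → ℝ) → Matrix α α ℂ) (x : Fin N → ℝ) : Matrix α α ℂ :=
  fun p q => deriv (fun t : ℝ => f (Function.update x ν t) p q) (x ν)

def mcomm {α : Type} [Fintype α] [DecidableEq α] (A B : Matrix α α ℂ) : Matrix α α ℂ :=
  A * B - B * A

/-- the classical limit r(λ,x) := −(1/2)·∂_γ R(γ,λ,x)|_{γ=0} -/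
def rLimit (R : ℝ → ℂ → (Fin N → ℝ) → Matrix (Fin N × Fin N) (Fin N × Fin N) ℂ)
    (lam : ℂ) (x : Fin N → ℝ) : Matrix (Fin N × Fin N) (Fin N × Fin N) ℂ :=
  Matrix.of fun p q => -(1/2 : ℂ) * deriv (fun γ : ℝ => R γ lam x p q) 0

lemma pack (ε : ℝ) (hε : 0 < ε) (x : Fin N → ℝ) (F : ℝ × (Fin N → ℝ) → ℂ)
    (hF : ContDiffOn ℝ 2 F (Set.Ioo (-ε) ε ×ˢ (Set.univ : Set (Fin N → ℝ))))
    (hconst : ∀ y y', F (0, y) = F (0, y')) :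
    ∃ c2 : ℂ, ∃ Q : Fin N → ℂ, ∀ s : ℝ, ∀ k : Fin N, ∃ g1 : ℝ → ℂ,
      (∀ γ ∈ Set.Ioo (-ε) ε,
        HasDerivAt (fun γ => F (γ, x + (s*γ) • (Pi.single k 1 : Fin N → ℝ))) (g1 γ) γ) ∧
      g1 0 = deriv (fun γ : ℝ => F (γ, x)) 0 ∧
      HasDerivAt g1 (c2 + 2 * (s:ℂ) *
        (deriv (fun t => deriv (fun γ : ℝ => F (γ, Function.update x k t)) 0) (x k))
        + (s:ℂ)^2 * Q k) 0 := by
  classical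
  set U : Set (ℝ × (Fin N → ℝ)) := Set.Ioo (-ε) ε ×ˢ (Set.univ : Set (Fin N → ℝ)) with hUdef
  have hU : IsOpen U := isOpen_Ioo.prod isOpen_univ
  have hz₀ : ((0:ℝ), x) ∈ U := by
    constructor
    · exact ⟨neg_lt_zero.mpr hε, hε⟩
    · trivial
  have hmem : ∀ {z : ℝ × (Fin N → ℝ)}, z ∈ U → U ∈ nhds z := fun hz => hU.mem_nhds hz
  have h1 : DifferentiableOn ℝ F U := hF.differentiableOn (by norm_num)
  have hdiff : ∀ {z : ℝ × (Fin N → ℝ)}, z ∈ U → DifferentiableAt ℝ F z :=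
    fun hz => (h1.differentiableAt (hmem hz))
  have hf'C : ContDiffOn ℝ 1 (fun z => fderiv ℝ F z) U :=
    hF.fderiv_of_isOpen hU (by norm_num)
  have hf''d : DifferentiableAt ℝ (fun z => fderiv ℝ F z) ((0:ℝ), x) :=
    (hf'C.differentiableOn one_ne_zero).differentiableAt (hmem hz₀)
  set f'' := fderiv ℝ (fun z => fderiv ℝ F z) ((0:ℝ), x) with hf''def
  have hf'' : HasFDerivAt (fun z => fderiv ℝ F z) f'' ((0:ℝ), x) := hf''d.hasFDerivAt
  have hev : ∀ᶠ y in nhds ((0:ℝ), x), HasFDerivAt F (fderiv ℝ F y) y := by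
    filter_upwards [hmem hz₀] with y hy using (hdiff hy).hasFDerivAt
  have hsym : ∀ v w, f'' v w = f'' w v := fun v w =>
    second_derivative_symmetric_of_eventually hev hf'' v w
  set e0 : ℝ × (Fin N → ℝ) := ((1:ℝ), (0 : Fin N → ℝ)) with he0
  -- x-partial of F at (0,x) vanishes
  have hxpart : ∀ w : Fin N → ℝ, fderiv ℝ F ((0:ℝ), x) ((0:ℝ), w) = 0 := by
    intro w
    have hinr : HasFDerivAt (fun y : Fin N → ℝ => ((0:ℝ), y))
        (ContinuousLinearMap.inr ℝ ℝ (Fin N → ℝ)) x :=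
      (ContinuousLinearMap.inr ℝ ℝ (Fin N → ℝ)).hasFDerivAt
    have hcomp : HasFDerivAt (fun y : Fin N → ℝ => F ((0:ℝ), y))
        ((fderiv ℝ F ((0:ℝ), x)).comp (ContinuousLinearMap.inr ℝ ℝ (Fin N → ℝ))) x :=
      (hdiff hz₀).hasFDerivAt.comp x hinr
    have hconst' : (fun y : Fin N → ℝ => F ((0:ℝ), y)) = fun _ => F ((0:ℝ), x) :=
      funext fun y => hconst y x
    rw [hconst'] at hcomp
    have := hcomp.unique (hasFDerivAt_const _ _)
    calc fderiv ℝ F ((0:ℝ), x) ((0:ℝ), w)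
        = ((fderiv ℝ F ((0:ℝ), x)).comp (ContinuousLinearMap.inr ℝ ℝ (Fin N → ℝ))) w := rfl
      _ = 0 := by rw [this]; rfl
  -- γ-derivative at 0 for any fixed second argument
  have derivin : ∀ y : Fin N → ℝ, deriv (fun γ : ℝ => F (γ, y)) 0 = fderiv ℝ F ((0:ℝ), y) e0 := by
    intro y
    have hy : ((0:ℝ), y) ∈ U := ⟨⟨neg_lt_zero.mpr hε, hε⟩, trivial⟩
    have hcurve : HasDerivAt (fun γ : ℝ => ((γ : ℝ), y)) ((1:ℝ), (0 : Fin N → ℝ)) 0 :=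
      (hasDerivAt_id 0).prodMk (hasDerivAt_const 0 y)
    exact ((hdiff hy).hasFDerivAt.comp_hasDerivAt 0 hcurve).deriv
  -- mixed partial characterization
  have mval : ∀ k : Fin N,
      deriv (fun t => deriv (fun γ : ℝ => F (γ, Function.update x k t)) 0) (x k)
        = f'' ((0:ℝ), Pi.single k 1) e0 := by
    intro k
    have hψ : HasDerivAt (fun t : ℝ => ((0:ℝ), Function.update x k t))
        ((0:ℝ), (Pi.single k 1 : Fin N → ℝ)) (x k) :=
      (hasDerivAt_const _ _).prodMk (hasDerivAt_update x k (x k))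
    have hf''ψ : HasFDerivAt (fun z => fderiv ℝ F z) f'' ((0:ℝ), Function.update x k (x k)) := by
      rw [Function.update_eq_self]; exact hf''
    have hcl : HasDerivAt (fun t : ℝ => fderiv ℝ F ((0:ℝ), Function.update x k t))
        (f'' ((0:ℝ), (Pi.single k 1 : Fin N → ℝ))) (x k) :=
      hf''ψ.comp_hasDerivAt _ hψ
    have happ := hcl.clm_apply (hasDerivAt_const (x k) e0)
    have happ' : HasDerivAt (fun t : ℝ => fderiv ℝ F ((0:ℝ), Function.update x k t) e0)
        (f'' ((0:ℝ), (Pi.single k 1 : Fin N → ℝ)) e0) (x k) := by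
      simpa using happ
    have hfe : (fun t : ℝ => deriv (fun γ : ℝ => F (γ, Function.update x k t)) 0)
        = fun t : ℝ => fderiv ℝ F ((0:ℝ), Function.update x k t) e0 :=
      funext fun t => derivin _
    rw [hfe]
    exact happ'.deriv
  refine ⟨f'' e0 e0, fun k => f'' ((0:ℝ), Pi.single k 1) ((0:ℝ), Pi.single k 1), ?_⟩
  intro s k
  refine ⟨fun γ => fderiv ℝ F (γ, x + (s*γ) • (Pi.single k 1 : Fin N → ℝ)) ((1:ℝ), s • (Pi.single k 1 : Fin N → ℝ)), ?_, ?_, ?_⟩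
  · intro γ hγ
    have hin : HasDerivAt (fun γ' : ℝ => x + (s*γ') • (Pi.single k 1 : Fin N → ℝ))
        (s • (Pi.single k 1 : Fin N → ℝ)) γ := by
      have h := (((hasDerivAt_id γ).const_mul s).smul_const (Pi.single k 1 : Fin N → ℝ)).const_add x
      simpa using h
    have hφ : HasDerivAt (fun γ' : ℝ => ((γ' : ℝ), x + (s*γ') • (Pi.single k 1 : Fin N → ℝ)))
        ((1:ℝ), s • (Pi.single k 1 : Fin N → ℝ)) γ := (hasDerivAt_id γ).prodMk hin
    have hmemφ : ((γ : ℝ), x + (s*γ) • (Pi.single k 1 : Fin N → ℝ)) ∈ U := ⟨hγ, trivial⟩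
    exact (hdiff hmemφ).hasFDerivAt.comp_hasDerivAt γ hφ
  · have h0 : ((0:ℝ), x + (s*0) • (Pi.single k 1 : Fin N → ℝ)) = ((0:ℝ), x) := by
      simp
    show fderiv ℝ F ((0:ℝ), x + (s*0) • (Pi.single k 1 : Fin N → ℝ)) ((1:ℝ), s • (Pi.single k 1 : Fin N → ℝ)) = _
    rw [h0, derivin x]
    have hdecomp : ((1:ℝ), s • (Pi.single k 1 : Fin N → ℝ))
        = e0 + ((0:ℝ), s • (Pi.single k 1 : Fin N → ℝ)) := by
      rw [he0]; ext <;> simp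
    rw [hdecomp, map_add, hxpart]
    simp
  · have hin : HasDerivAt (fun γ' : ℝ => x + (s*γ') • (Pi.single k 1 : Fin N → ℝ))
        (s • (Pi.single k 1 : Fin N → ℝ)) 0 := by
      have h := (((hasDerivAt_id (0:ℝ)).const_mul s).smul_const (Pi.single k 1 : Fin N → ℝ)).const_add x
      simpa using h
    have hφ : HasDerivAt (fun γ' : ℝ => ((γ' : ℝ), x + (s*γ') • (Pi.single k 1 : Fin N → ℝ)))
        ((1:ℝ), s • (Pi.single k 1 : Fin N → ℝ)) 0 := (hasDerivAt_id 0).prodMk hin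
    have hf''φ : HasFDerivAt (fun z => fderiv ℝ F z) f''
        ((0:ℝ), x + (s*0) • (Pi.single k 1 : Fin N → ℝ)) := by
      have h0 : ((0:ℝ), x + (s*0) • (Pi.single k 1 : Fin N → ℝ)) = ((0:ℝ), x) := by simp
      rw [h0]; exact hf''
    have hc : HasDerivAt
        (fun γ : ℝ => fderiv ℝ F ((γ : ℝ), x + (s*γ) • (Pi.single k 1 : Fin N → ℝ)))
        (f'' ((1:ℝ), s • (Pi.single k 1 : Fin N → ℝ))) 0 :=
      hf''φ.comp_hasDerivAt 0 hφ
    have happ := hc.clm_apply (hasDerivAt_const (0:ℝ)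
      ((1:ℝ), s • (Pi.single k 1 : Fin N → ℝ)))
    have happ' : HasDerivAt
        (fun γ : ℝ => fderiv ℝ F ((γ : ℝ), x + (s*γ) • (Pi.single k 1 : Fin N → ℝ))
          ((1:ℝ), s • (Pi.single k 1 : Fin N → ℝ)))
        (f'' ((1:ℝ), s • (Pi.single k 1 : Fin N → ℝ)) ((1:ℝ), s • (Pi.single k 1 : Fin N → ℝ))) 0 := by
      simpa using happ
    have hval : f'' ((1:ℝ), s • (Pi.single k 1 : Fin N → ℝ)) ((1:ℝ), s • (Pi.single k 1 : Fin N → ℝ))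
        = f'' e0 e0 + 2 * (s:ℂ) *
          (deriv (fun t => deriv (fun γ : ℝ => F (γ, Function.update x k t)) 0) (x k))
          + (s:ℂ)^2 * (f'' ((0:ℝ), Pi.single k 1) ((0:ℝ), Pi.single k 1)) := by
      rw [mval k]
      have hdecomp : ((1:ℝ), s • (Pi.single k 1 : Fin N → ℝ))
          = e0 + s • ((0:ℝ), (Pi.single k 1 : Fin N → ℝ)) := by
        rw [he0]; ext <;> simp
      rw [hdecomp]
      simp only [map_add, _root_.map_smul, ContinuousLinearMap.add_apply,
        ContinuousLinearMap.smul_apply]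
      rw [hsym e0 ((0:ℝ), (Pi.single k 1 : Fin N → ℝ))]
      simp only [Complex.real_smul]
      ring
    rw [← hval]
    exact happ'


def indC (c : Prop) [Decidable c] : ℂ := if c then 1 else 0

lemma ite_indC (c : Prop) [Decidable c] (x : ℂ) : (if c then x else 0) = indC c * x := by
  unfold indC; split_ifs <;> simp

lemma indC_mul_eq {α : Type*} [DecidableEq α] (a b : α) (f : α → ℂ) :
    indC (a = b) * f a = indC (a = b) * f b := by
  unfold indC; split_ifs with h
  · rw [h]
  · simp

lemma sum_ite_const {α β : Type*} [Fintype α] [AddCommMonoid β] (c : Prop) [Decidable c]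
    (f g : α → β) :
    (∑ x : α, (if c then f x else g x)) = if c then ∑ x : α, f x else ∑ x : α, g x := by
  split_ifs <;> rfl

theorem classical_limit_GNF_is_GCYBE (hN : 2 ≤ N)
    (ε : ℝ) (hε : 0 < ε) (Λ : Set ℂ)
    (R : ℝ → ℂ → (Fin N → ℝ) → Matrix (Fin N × Fin N) (Fin N × Fin N) ℂ)
    (hC2 : ∀ lam ∈ Λ, ∀ p q : Fin N × Fin N,
      ContDiffOn ℝ 2 (fun y : ℝ × (Fin N → ℝ) => R y.1 lam y.2 p q)
        (Set.Ioo (-ε) ε ×ˢ (Set.univ : Set (Fin N → ℝ))))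
    (hId : ∀ lam ∈ Λ, ∀ x : Fin N → ℝ, R 0 lam x = 1)
    (hGNF : ∀ γ ∈ Set.Ioo (-ε) ε, ∀ lam₁ lam₂ lam₃ : ℂ,
      lam₁ - lam₂ ∈ Λ → lam₁ - lam₃ ∈ Λ → lam₂ - lam₃ ∈ Λ → ∀ x : Fin N → ℝ,
      sh12 N (R γ (lam₁ - lam₂)) x γ * sh13 N (R γ (lam₁ - lam₃)) x (-γ) *
        sh23 N (R γ (lam₂ - lam₃)) x γ =
      sh23 N (R γ (lam₂ - lam₃)) x (-γ) * sh13 N (R γ (lam₁ - lam₃)) x γ *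
        sh12 N (R γ (lam₁ - lam₂)) x (-γ)) :
    ∀ lam₁ lam₂ lam₃ : ℂ,
      lam₁ - lam₂ ∈ Λ → lam₁ - lam₃ ∈ Λ → lam₂ - lam₃ ∈ Λ → ∀ x : Fin N → ℝ,
      mcomm (pl12 N (rLimit N R (lam₁ - lam₂) x)) (pl13 N (rLimit N R (lam₁ - lam₃) x)) +
      mcomm (pl12 N (rLimit N R (lam₁ - lam₂) x)) (pl23 N (rLimit N R (lam₂ - lam₃) x)) +
      mcomm (pl13 N (rLimit N R (lam₁ - lam₃) x)) (pl23 N (rLimit N R (lam₂ - lam₃) x)) -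
      (∑ ν : Fin N, pl1 N (E N ν ν) * pl23 N (pderivMat N ν (rLimit N R (lam₂ - lam₃)) x)) +
      (∑ ν : Fin N, pl2 N (E N ν ν) * pl13 N (pderivMat N ν (rLimit N R (lam₁ - lam₃)) x)) -
      (∑ ν : Fin N, pl3 N (E N ν ν) * pl12 N (pderivMat N ν (rLimit N R (lam₁ - lam₂)) x)) = 0 := by
  classical
  intro lam₁ lam₂ lam₃ h12 h13 h23 x
  have h0mem : (0:ℝ) ∈ Set.Ioo (-ε) ε := Set.mem_Ioo.mpr ⟨neg_lt_zero.mpr hε, hε⟩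
  have hIoo : Set.Ioo (-ε) ε ∈ nhds (0:ℝ) := Ioo_mem_nhds h0mem.1 h0mem.2
  have K12 : ∀ a b : Fin N × Fin N, ∃ c2 : ℂ, ∃ Q : Fin N → ℂ, ∀ s : ℝ, ∀ k : Fin N, ∃ g1 : ℝ → ℂ,
      (∀ γ ∈ Set.Ioo (-ε) ε,
        HasDerivAt (fun γ => R γ (lam₁ - lam₂) (x + (s*γ) • (Pi.single k 1 : Fin N → ℝ)) a b) (g1 γ) γ) ∧
      g1 0 = deriv (fun γ : ℝ => R γ (lam₁ - lam₂) x a b) 0 ∧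
      HasDerivAt g1 (c2 + 2 * (s:ℂ) *
        (deriv (fun t => deriv (fun γ : ℝ => R γ (lam₁ - lam₂) (Function.update x k t) a b) 0) (x k))
        + (s:ℂ)^2 * Q k) 0 := fun a b =>
    pack N ε hε x (fun y => R y.1 (lam₁ - lam₂) y.2 a b) (hC2 _ h12 a b)
      (fun y y' => by simp only [hId _ h12])
  choose c212 Q12 g12 hg12 hg012 hgd12 using K12
  have K13 : ∀ a b : Fin N × Fin N, ∃ c2 : ℂ, ∃ Q : Fin N → ℂ, ∀ s : ℝ, ∀ k : Fin N, ∃ g1 : ℝ → ℂ,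
      (∀ γ ∈ Set.Ioo (-ε) ε,
        HasDerivAt (fun γ => R γ (lam₁ - lam₃) (x + (s*γ) • (Pi.single k 1 : Fin N → ℝ)) a b) (g1 γ) γ) ∧
      g1 0 = deriv (fun γ : ℝ => R γ (lam₁ - lam₃) x a b) 0 ∧
      HasDerivAt g1 (c2 + 2 * (s:ℂ) *
        (deriv (fun t => deriv (fun γ : ℝ => R γ (lam₁ - lam₃) (Function.update x k t) a b) 0) (x k))
        + (s:ℂ)^2 * Q k) 0 := fun a b =>
    pack N ε hε x (fun y => R y.1 (lam₁ - lam₃) y.2 a b) (hC2 _ h13 a b)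
      (fun y y' => by simp only [hId _ h13])
  choose c213 Q13 g13 hg13 hg013 hgd13 using K13
  have K23 : ∀ a b : Fin N × Fin N, ∃ c2 : ℂ, ∃ Q : Fin N → ℂ, ∀ s : ℝ, ∀ k : Fin N, ∃ g1 : ℝ → ℂ,
      (∀ γ ∈ Set.Ioo (-ε) ε,
        HasDerivAt (fun γ => R γ (lam₂ - lam₃) (x + (s*γ) • (Pi.single k 1 : Fin N → ℝ)) a b) (g1 γ) γ) ∧
      g1 0 = deriv (fun γ : ℝ => R γ (lam₂ - lam₃) x a b) 0 ∧
      HasDerivAt g1 (c2 + 2 * (s:ℂ) *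
        (deriv (fun t => deriv (fun γ : ℝ => R γ (lam₂ - lam₃) (Function.update x k t) a b) 0) (x k))
        + (s:ℂ)^2 * Q k) 0 := fun a b =>
    pack N ε hε x (fun y => R y.1 (lam₂ - lam₃) y.2 a b) (hC2 _ h23 a b)
      (fun y y' => by simp only [hId _ h23])
  choose c223 Q23 g23 hg23 hg023 hgd23 using K23
  set t1 : (Fin N × Fin N × Fin N) → (Fin N × Fin N × Fin N) → ℝ → ℂ :=
    fun pp uu γ => if pp.2.2 = uu.2.2 then R γ (lam₁ - lam₂) (x + γ • (Pi.single uu.2.2 1 : Fin N → ℝ)) (pp.1, pp.2.1) (uu.1, uu.2.1) else 0 with ht1def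
  set t1p : (Fin N × Fin N × Fin N) → (Fin N × Fin N × Fin N) → ℝ → ℂ :=
    fun pp uu γ => if pp.2.2 = uu.2.2 then g12 (pp.1, pp.2.1) (uu.1, uu.2.1) 1 uu.2.2 γ else 0 with ht1pdef
  have hDt1 : ∀ γ ∈ Set.Ioo (-ε) ε, ∀ pp uu : Fin N × Fin N × Fin N, HasDerivAt (t1 pp uu) (t1p pp uu γ) γ := by
    intro γ hγ pp uu
    simp only [ht1def, ht1pdef]
    split_ifs with h
    · simpa only [one_mul] using hg12 (pp.1, pp.2.1) (uu.1, uu.2.1) 1 uu.2.2 γ hγ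
    · exact hasDerivAt_const _ _
  have hZt1 : ∀ pp uu : Fin N × Fin N × Fin N, HasDerivAt (t1 pp uu) (t1p pp uu 0) 0 := fun pp uu => hDt1 0 h0mem pp uu
  have hSt1 : ∀ pp uu : Fin N × Fin N × Fin N, HasDerivAt (t1p pp uu)
      (if pp.2.2 = uu.2.2 then c212 (pp.1, pp.2.1) (uu.1, uu.2.1) + 2 * ((1 : ℝ) : ℂ) *
        (deriv (fun t => deriv (fun γ : ℝ => R γ (lam₁ - lam₂) (Function.update x uu.2.2 t) (pp.1, pp.2.1) (uu.1, uu.2.1)) 0) (x uu.2.2))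
        + ((1 : ℝ) : ℂ)^2 * Q12 (pp.1, pp.2.1) (uu.1, uu.2.1) uu.2.2 else 0) 0 := by
    intro pp uu
    simp only [ht1pdef]
    split_ifs with h
    · exact hgd12 (pp.1, pp.2.1) (uu.1, uu.2.1) 1 uu.2.2
    · exact hasDerivAt_const _ _
  set t2 : (Fin N × Fin N × Fin N) → (Fin N × Fin N × Fin N) → ℝ → ℂ :=
    fun pp uu γ => if pp.2.1 = uu.2.1 then R γ (lam₁ - lam₃) (x + (-γ) • (Pi.single uu.2.1 1 : Fin N → ℝ)) (pp.1, pp.2.2) (uu.1, uu.2.2) else 0 with ht2def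
  set t2p : (Fin N × Fin N × Fin N) → (Fin N × Fin N × Fin N) → ℝ → ℂ :=
    fun pp uu γ => if pp.2.1 = uu.2.1 then g13 (pp.1, pp.2.2) (uu.1, uu.2.2) (-1) uu.2.1 γ else 0 with ht2pdef
  have hDt2 : ∀ γ ∈ Set.Ioo (-ε) ε, ∀ pp uu : Fin N × Fin N × Fin N, HasDerivAt (t2 pp uu) (t2p pp uu γ) γ := by
    intro γ hγ pp uu
    simp only [ht2def, ht2pdef]
    split_ifs with h
    · simpa only [neg_one_mul] using hg13 (pp.1, pp.2.2) (uu.1, uu.2.2) (-1) uu.2.1 γ hγ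
    · exact hasDerivAt_const _ _
  have hZt2 : ∀ pp uu : Fin N × Fin N × Fin N, HasDerivAt (t2 pp uu) (t2p pp uu 0) 0 := fun pp uu => hDt2 0 h0mem pp uu
  have hSt2 : ∀ pp uu : Fin N × Fin N × Fin N, HasDerivAt (t2p pp uu)
      (if pp.2.1 = uu.2.1 then c213 (pp.1, pp.2.2) (uu.1, uu.2.2) + 2 * (((-1) : ℝ) : ℂ) *
        (deriv (fun t => deriv (fun γ : ℝ => R γ (lam₁ - lam₃) (Function.update x uu.2.1 t) (pp.1, pp.2.2) (uu.1, uu.2.2)) 0) (x uu.2.1))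
        + (((-1) : ℝ) : ℂ)^2 * Q13 (pp.1, pp.2.2) (uu.1, uu.2.2) uu.2.1 else 0) 0 := by
    intro pp uu
    simp only [ht2pdef]
    split_ifs with h
    · exact hgd13 (pp.1, pp.2.2) (uu.1, uu.2.2) (-1) uu.2.1
    · exact hasDerivAt_const _ _
  set t3 : (Fin N × Fin N × Fin N) → (Fin N × Fin N × Fin N) → ℝ → ℂ :=
    fun pp uu γ => if pp.1 = uu.1 then R γ (lam₂ - lam₃) (x + γ • (Pi.single uu.1 1 : Fin N → ℝ)) (pp.2.1, pp.2.2) (uu.2.1, uu.2.2) else 0 with ht3def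
  set t3p : (Fin N × Fin N × Fin N) → (Fin N × Fin N × Fin N) → ℝ → ℂ :=
    fun pp uu γ => if pp.1 = uu.1 then g23 (pp.2.1, pp.2.2) (uu.2.1, uu.2.2) 1 uu.1 γ else 0 with ht3pdef
  have hDt3 : ∀ γ ∈ Set.Ioo (-ε) ε, ∀ pp uu : Fin N × Fin N × Fin N, HasDerivAt (t3 pp uu) (t3p pp uu γ) γ := by
    intro γ hγ pp uu
    simp only [ht3def, ht3pdef]
    split_ifs with h
    · simpa only [one_mul] using hg23 (pp.2.1, pp.2.2) (uu.2.1, uu.2.2) 1 uu.1 γ hγ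
    · exact hasDerivAt_const _ _
  have hZt3 : ∀ pp uu : Fin N × Fin N × Fin N, HasDerivAt (t3 pp uu) (t3p pp uu 0) 0 := fun pp uu => hDt3 0 h0mem pp uu
  have hSt3 : ∀ pp uu : Fin N × Fin N × Fin N, HasDerivAt (t3p pp uu)
      (if pp.1 = uu.1 then c223 (pp.2.1, pp.2.2) (uu.2.1, uu.2.2) + 2 * ((1 : ℝ) : ℂ) *
        (deriv (fun t => deriv (fun γ : ℝ => R γ (lam₂ - lam₃) (Function.update x uu.1 t) (pp.2.1, pp.2.2) (uu.2.1, uu.2.2)) 0) (x uu.1))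
        + ((1 : ℝ) : ℂ)^2 * Q23 (pp.2.1, pp.2.2) (uu.2.1, uu.2.2) uu.1 else 0) 0 := by
    intro pp uu
    simp only [ht3pdef]
    split_ifs with h
    · exact hgd23 (pp.2.1, pp.2.2) (uu.2.1, uu.2.2) 1 uu.1
    · exact hasDerivAt_const _ _
  set w1 : (Fin N × Fin N × Fin N) → (Fin N × Fin N × Fin N) → ℝ → ℂ :=
    fun pp uu γ => if pp.1 = uu.1 then R γ (lam₂ - lam₃) (x + (-γ) • (Pi.single uu.1 1 : Fin N → ℝ)) (pp.2.1, pp.2.2) (uu.2.1, uu.2.2) else 0 with hw1def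
  set w1p : (Fin N × Fin N × Fin N) → (Fin N × Fin N × Fin N) → ℝ → ℂ :=
    fun pp uu γ => if pp.1 = uu.1 then g23 (pp.2.1, pp.2.2) (uu.2.1, uu.2.2) (-1) uu.1 γ else 0 with hw1pdef
  have hDw1 : ∀ γ ∈ Set.Ioo (-ε) ε, ∀ pp uu : Fin N × Fin N × Fin N, HasDerivAt (w1 pp uu) (w1p pp uu γ) γ := by
    intro γ hγ pp uu
    simp only [hw1def, hw1pdef]
    split_ifs with h
    · simpa only [neg_one_mul] using hg23 (pp.2.1, pp.2.2) (uu.2.1, uu.2.2) (-1) uu.1 γ hγ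
    · exact hasDerivAt_const _ _
  have hZw1 : ∀ pp uu : Fin N × Fin N × Fin N, HasDerivAt (w1 pp uu) (w1p pp uu 0) 0 := fun pp uu => hDw1 0 h0mem pp uu
  have hSw1 : ∀ pp uu : Fin N × Fin N × Fin N, HasDerivAt (w1p pp uu)
      (if pp.1 = uu.1 then c223 (pp.2.1, pp.2.2) (uu.2.1, uu.2.2) + 2 * (((-1) : ℝ) : ℂ) *
        (deriv (fun t => deriv (fun γ : ℝ => R γ (lam₂ - lam₃) (Function.update x uu.1 t) (pp.2.1, pp.2.2) (uu.2.1, uu.2.2)) 0) (x uu.1))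
        + (((-1) : ℝ) : ℂ)^2 * Q23 (pp.2.1, pp.2.2) (uu.2.1, uu.2.2) uu.1 else 0) 0 := by
    intro pp uu
    simp only [hw1pdef]
    split_ifs with h
    · exact hgd23 (pp.2.1, pp.2.2) (uu.2.1, uu.2.2) (-1) uu.1
    · exact hasDerivAt_const _ _
  set w2 : (Fin N × Fin N × Fin N) → (Fin N × Fin N × Fin N) → ℝ → ℂ :=
    fun pp uu γ => if pp.2.1 = uu.2.1 then R γ (lam₁ - lam₃) (x + γ • (Pi.single uu.2.1 1 : Fin N → ℝ)) (pp.1, pp.2.2) (uu.1, uu.2.2) else 0 with hw2def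
  set w2p : (Fin N × Fin N × Fin N) → (Fin N × Fin N × Fin N) → ℝ → ℂ :=
    fun pp uu γ => if pp.2.1 = uu.2.1 then g13 (pp.1, pp.2.2) (uu.1, uu.2.2) 1 uu.2.1 γ else 0 with hw2pdef
  have hDw2 : ∀ γ ∈ Set.Ioo (-ε) ε, ∀ pp uu : Fin N × Fin N × Fin N, HasDerivAt (w2 pp uu) (w2p pp uu γ) γ := by
    intro γ hγ pp uu
    simp only [hw2def, hw2pdef]
    split_ifs with h
    · simpa only [one_mul] using hg13 (pp.1, pp.2.2) (uu.1, uu.2.2) 1 uu.2.1 γ hγ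
    · exact hasDerivAt_const _ _
  have hZw2 : ∀ pp uu : Fin N × Fin N × Fin N, HasDerivAt (w2 pp uu) (w2p pp uu 0) 0 := fun pp uu => hDw2 0 h0mem pp uu
  have hSw2 : ∀ pp uu : Fin N × Fin N × Fin N, HasDerivAt (w2p pp uu)
      (if pp.2.1 = uu.2.1 then c213 (pp.1, pp.2.2) (uu.1, uu.2.2) + 2 * ((1 : ℝ) : ℂ) *
        (deriv (fun t => deriv (fun γ : ℝ => R γ (lam₁ - lam₃) (Function.update x uu.2.1 t) (pp.1, pp.2.2) (uu.1, uu.2.2)) 0) (x uu.2.1))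
        + ((1 : ℝ) : ℂ)^2 * Q13 (pp.1, pp.2.2) (uu.1, uu.2.2) uu.2.1 else 0) 0 := by
    intro pp uu
    simp only [hw2pdef]
    split_ifs with h
    · exact hgd13 (pp.1, pp.2.2) (uu.1, uu.2.2) 1 uu.2.1
    · exact hasDerivAt_const _ _
  set w3 : (Fin N × Fin N × Fin N) → (Fin N × Fin N × Fin N) → ℝ → ℂ :=
    fun pp uu γ => if pp.2.2 = uu.2.2 then R γ (lam₁ - lam₂) (x + (-γ) • (Pi.single uu.2.2 1 : Fin N → ℝ)) (pp.1, pp.2.1) (uu.1, uu.2.1) else 0 with hw3def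
  set w3p : (Fin N × Fin N × Fin N) → (Fin N × Fin N × Fin N) → ℝ → ℂ :=
    fun pp uu γ => if pp.2.2 = uu.2.2 then g12 (pp.1, pp.2.1) (uu.1, uu.2.1) (-1) uu.2.2 γ else 0 with hw3pdef
  have hDw3 : ∀ γ ∈ Set.Ioo (-ε) ε, ∀ pp uu : Fin N × Fin N × Fin N, HasDerivAt (w3 pp uu) (w3p pp uu γ) γ := by
    intro γ hγ pp uu
    simp only [hw3def, hw3pdef]
    split_ifs with h
    · simpa only [neg_one_mul] using hg12 (pp.1, pp.2.1) (uu.1, uu.2.1) (-1) uu.2.2 γ hγ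
    · exact hasDerivAt_const _ _
  have hZw3 : ∀ pp uu : Fin N × Fin N × Fin N, HasDerivAt (w3 pp uu) (w3p pp uu 0) 0 := fun pp uu => hDw3 0 h0mem pp uu
  have hSw3 : ∀ pp uu : Fin N × Fin N × Fin N, HasDerivAt (w3p pp uu)
      (if pp.2.2 = uu.2.2 then c212 (pp.1, pp.2.1) (uu.1, uu.2.1) + 2 * (((-1) : ℝ) : ℂ) *
        (deriv (fun t => deriv (fun γ : ℝ => R γ (lam₁ - lam₂) (Function.update x uu.2.2 t) (pp.1, pp.2.1) (uu.1, uu.2.1)) 0) (x uu.2.2))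
        + (((-1) : ℝ) : ℂ)^2 * Q12 (pp.1, pp.2.1) (uu.1, uu.2.1) uu.2.2 else 0) 0 := by
    intro pp uu
    simp only [hw3pdef]
    split_ifs with h
    · exact hgd12 (pp.1, pp.2.1) (uu.1, uu.2.1) (-1) uu.2.2
    · exact hasDerivAt_const _ _
  ext p q
  -- the two sides of GNF, entrywise, as explicit double sums
  have hbL : ∀ γ : ℝ, (sh12 N (R γ (lam₁ - lam₂)) x γ * sh13 N (R γ (lam₁ - lam₃)) x (-γ) *
      sh23 N (R γ (lam₂ - lam₃)) x γ) p q
      = ∑ v : Fin N × Fin N × Fin N, ∑ u : Fin N × Fin N × Fin N, (t1 p u γ * t2 u v γ) * t3 v q γ := by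
    intro γ
    simp only [ht1def, ht2def, ht3def, sh12, sh13, sh23, Matrix.mul_apply, Finset.sum_mul]
  have hbR : ∀ γ : ℝ, (sh23 N (R γ (lam₂ - lam₃)) x (-γ) * sh13 N (R γ (lam₁ - lam₃)) x γ *
      sh12 N (R γ (lam₁ - lam₂)) x (-γ)) p q
      = ∑ v : Fin N × Fin N × Fin N, ∑ u : Fin N × Fin N × Fin N, (w1 p u γ * w2 u v γ) * w3 v q γ := by
    intro γ
    simp only [hw1def, hw2def, hw3def, sh12, sh13, sh23, Matrix.mul_apply, Finset.sum_mul]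
  have hevq : (fun γ : ℝ => ∑ v : Fin N × Fin N × Fin N, ∑ u : Fin N × Fin N × Fin N, (t1 p u γ * t2 u v γ) * t3 v q γ)
      =ᶠ[nhds (0:ℝ)] (fun γ : ℝ => ∑ v : Fin N × Fin N × Fin N, ∑ u : Fin N × Fin N × Fin N, (w1 p u γ * w2 u v γ) * w3 v q γ) := by
    filter_upwards [hIoo] with γ hγ
    rw [← hbL γ, ← hbR γ]
    exact congrFun (congrFun (hGNF γ hγ lam₁ lam₂ lam₃ h12 h13 h23 x) p) q
  -- first-derivative functions
  set LL : ℝ → ℂ := fun γ => ∑ v : Fin N × Fin N × Fin N, ∑ u : Fin N × Fin N × Fin N,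
      ((t1p p u γ * t2 u v γ + t1 p u γ * t2p u v γ) * t3 v q γ + (t1 p u γ * t2 u v γ) * t3p v q γ)
    with hLLdef
  set RR : ℝ → ℂ := fun γ => ∑ v : Fin N × Fin N × Fin N, ∑ u : Fin N × Fin N × Fin N,
      ((w1p p u γ * w2 u v γ + w1 p u γ * w2p u v γ) * w3 v q γ + (w1 p u γ * w2 u v γ) * w3p v q γ)
    with hRRdef
  have hL1 : ∀ γ ∈ Set.Ioo (-ε) ε, HasDerivAt
      (fun γ : ℝ => ∑ v : Fin N × Fin N × Fin N, ∑ u : Fin N × Fin N × Fin N, (t1 p u γ * t2 u v γ) * t3 v q γ) (LL γ) γ := by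
    intro γ hγ
    exact HasDerivAt.fun_sum fun v _ => HasDerivAt.fun_sum fun u _ =>
      ((hDt1 γ hγ p u).mul (hDt2 γ hγ u v)).mul (hDt3 γ hγ v q)
  have hR1 : ∀ γ ∈ Set.Ioo (-ε) ε, HasDerivAt
      (fun γ : ℝ => ∑ v : Fin N × Fin N × Fin N, ∑ u : Fin N × Fin N × Fin N, (w1 p u γ * w2 u v γ) * w3 v q γ) (RR γ) γ := by
    intro γ hγ
    exact HasDerivAt.fun_sum fun v _ => HasDerivAt.fun_sum fun u _ =>
      ((hDw1 γ hγ p u).mul (hDw2 γ hγ u v)).mul (hDw3 γ hγ v q)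
  -- second derivatives at 0
  have hL2 := HasDerivAt.fun_sum (x := (0:ℝ)) (u := (Finset.univ : Finset (Fin N × Fin N × Fin N))) fun v _ =>
    HasDerivAt.fun_sum (u := (Finset.univ : Finset (Fin N × Fin N × Fin N))) fun u _ =>
      ((((hSt1 p u).fun_mul (hZt2 u v)).fun_add ((hZt1 p u).fun_mul (hSt2 u v))).fun_mul (hZt3 v q)).fun_add
        (((hZt1 p u).fun_mul (hZt2 u v)).fun_mul (hSt3 v q))
  have hR2 := HasDerivAt.fun_sum (x := (0:ℝ)) (u := (Finset.univ : Finset (Fin N × Fin N × Fin N))) fun v _ =>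
    HasDerivAt.fun_sum (u := (Finset.univ : Finset (Fin N × Fin N × Fin N))) fun u _ =>
      ((((hSw1 p u).fun_mul (hZw2 u v)).fun_add ((hZw1 p u).fun_mul (hSw2 u v))).fun_mul (hZw3 v q)).fun_add
        (((hZw1 p u).fun_mul (hZw2 u v)).fun_mul (hSw3 v q))
  have hL2' : HasDerivAt LL _ 0 := hL2
  have hR2' : HasDerivAt RR _ 0 := hR2
  -- equate second derivatives through the GNF equation
  have efL : deriv (deriv (fun γ : ℝ => ∑ v : Fin N × Fin N × Fin N, ∑ u : Fin N × Fin N × Fin N, (t1 p u γ * t2 u v γ) * t3 v q γ)) 0 = deriv LL 0 := by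
    refine Filter.EventuallyEq.deriv_eq ?_
    filter_upwards [hIoo] with γ hγ using (hL1 γ hγ).deriv
  have efR : deriv (deriv (fun γ : ℝ => ∑ v : Fin N × Fin N × Fin N, ∑ u : Fin N × Fin N × Fin N, (w1 p u γ * w2 u v γ) * w3 v q γ)) 0 = deriv RR 0 := by
    refine Filter.EventuallyEq.deriv_eq ?_
    filter_upwards [hIoo] with γ hγ using (hR1 γ hγ).deriv
  have hfin : deriv LL 0 = deriv RR 0 :=
    efL.symm.trans (((hevq.deriv).deriv_eq).trans efR)
  rw [hL2'.deriv, hR2'.deriv] at hfin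
  have hfin0 := sub_eq_zero_of_eq hfin
  rw [Matrix.zero_apply]
  have h8 : (8:ℂ) ≠ 0 := by norm_num
  refine mul_left_cancel₀ h8 ?_
  rw [mul_zero, ← hfin0]
  simp only [ht1def, ht2def, ht3def, hw1def, hw2def, hw3def, ht1pdef, ht2pdef, ht3pdef,
    hw1pdef, hw2pdef, hw3pdef, hg012, hg013, hg023, mcomm, Matrix.sub_apply, Matrix.add_apply,
    Matrix.mul_apply, Matrix.sum_apply, pl12, pl13, pl23, pl1, pl2, pl3, E,
    Matrix.single, Matrix.of_apply, rLimit, pderivMat, deriv_const_mul_field,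
    hId _ h12, hId _ h13, hId _ h23, Matrix.one_apply, mul_zero, neg_zero, zero_smul,
    add_zero, zero_mul, mul_one, one_mul, mul_ite, ite_mul, Prod.mk.injEq, ite_and,
    Fintype.sum_prod_type, Finset.sum_ite_eq, Finset.sum_ite_eq', Finset.mem_univ, if_true,
    Finset.sum_add_distrib, sum_ite_const, Finset.sum_const_zero, zero_add, add_mul, mul_add]
  push_cast
  ring_nf
  simp only [ite_indC]
  simp only [mul_comm, mul_assoc, mul_left_comm, ← Finset.mul_sum]
  ring_nf
  rw [indC_mul_eq p.1 q.1 (fun ν => deriv (fun y => deriv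
        (fun γ : ℝ => R γ (lam₂ - lam₃) (Function.update x ν y) (p.2.1, p.2.2) (q.2.1, q.2.2)) 0) (x ν)),
      indC_mul_eq p.2.1 q.2.1 (fun ν => deriv (fun y => deriv
        (fun γ : ℝ => R γ (lam₁ - lam₃) (Function.update x ν y) (p.1, p.2.2) (q.1, q.2.2)) 0) (x ν)),
      indC_mul_eq p.2.2 q.2.2 (fun ν => deriv (fun y => deriv
        (fun γ : ℝ => R γ (lam₁ - lam₂) (Function.update x ν y) (p.1, p.2.1) (q.1, q.2.1)) 0) (x ν))]

end
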